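/- Consider the cubic P₃(ζ) = ζ³ + p₂ζ² + p₁ζ + p₀ with p₀ = ρ₁(β₃ − δ₁ − δ₂), p₁ = β₃(ρ₁ + 1) + ρ₁, p₂ = β₃ + ρ₁ + 1, where ρ₁, β₃, δ₁, δ₂ > 0 and δ₁ + δ₂ < β₃. Then p₁p₂ − p₀ = β₃²(ρ₁+1) + β₃(ρ₁+1)² + ρ₁(δ₁ + δ₂ + ρ₁ + 1) > 0 and all coefficients are positive, so by the Routh–Hurwitz criterion every root of P₃ has negative real part. -/
import Mathlib

lemma rh_cubic (p0 p1 p2 : ℝ) (h0 : 0 < p0) (h1 : 0 < p1) (h2 : 0 < p2)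
    (hrh : p0 < p1 * p2) :
    ∀ ζ : ℂ, ζ ^ 3 + (p2 : ℂ) * ζ ^ 2 + (p1 : ℂ) * ζ + (p0 : ℂ) = 0 → ζ.re < 0 := by
  rintro ⟨x, y⟩ hζ
  by_contra hx
  push_neg at hx
  simp only [Complex.le_def] at hx
  have hre := congrArg Complex.re hζ
  have him := congrArg Complex.im hζ
  simp only [Complex.add_re, Complex.add_im, Complex.mul_re, Complex.mul_im,
    Complex.ofReal_re, Complex.ofReal_im, Complex.zero_re, Complex.zero_im,
    pow_succ, pow_zero, one_mul, Complex.one_re, Complex.one_im, Complex.mul_im] at hre him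
  change (0:ℝ) ≤ x at hx
  rcases eq_or_ne y 0 with hy | hy
  · subst hy
    nlinarith [mul_nonneg (mul_nonneg hx hx) hx, mul_nonneg h2.le (mul_nonneg hx hx),
      mul_nonneg h1.le hx]
  · have him' : y * (3 * x ^ 2 - y ^ 2 + 2 * p2 * x + p1) = 0 := by linear_combination him
    have hA : 3 * x ^ 2 - y ^ 2 + 2 * p2 * x + p1 = 0 := (mul_eq_zero.mp him').resolve_left hy
    nlinarith [mul_nonneg (mul_nonneg hx hx) hx, mul_nonneg h2.le (mul_nonneg hx hx),
      mul_nonneg h1.le hx, mul_nonneg hx h2.le, mul_nonneg (mul_nonneg hx h2.le) h2.le]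

theorem stmt12 (ρ1 β3 δ1 δ2 : ℝ)
    (hρ1 : 0 < ρ1) (hβ3 : 0 < β3) (hδ1 : 0 < δ1) (hδ2 : 0 < δ2)
    (hδ : δ1 + δ2 < β3)
    (p0 p1 p2 : ℝ)
    (hp0 : p0 = ρ1 * (β3 - δ1 - δ2))
    (hp1 : p1 = β3 * (ρ1 + 1) + ρ1)
    (hp2 : p2 = β3 + ρ1 + 1) :
    p1 * p2 - p0 = β3 ^ 2 * (ρ1 + 1) + β3 * (ρ1 + 1) ^ 2 + ρ1 * (δ1 + δ2 + ρ1 + 1) ∧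
    0 < p0 ∧ 0 < p1 ∧ 0 < p2 ∧
    (∀ ζ : ℂ, ζ ^ 3 + (p2 : ℂ) * ζ ^ 2 + (p1 : ℂ) * ζ + (p0 : ℂ) = 0 → ζ.re < 0) := by
  have h0 : 0 < p0 := by rw [hp0]; nlinarith
  have h1 : 0 < p1 := by rw [hp1]; nlinarith
  have h2 : 0 < p2 := by rw [hp2]; nlinarith
  have hrh : p0 < p1 * p2 := by rw [hp0, hp1, hp2]; nlinarith
  exact ⟨by rw [hp0, hp1, hp2]; ring, h0, h1, h2, rh_cubic p0 p1 p2 h0 h1 h2 hrh⟩
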